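/- With G_k and G as in the context: (a) the sequence (G_k) is Cauchy in the L¹ seminorm: for every ε > 0 there exists N such that for all k, m ≥ N, ∫_{[0,1]} |G_k − G_m| dλ < ε; (b) ∫_{[0,1]} |G − G_k| dλ → 0 as k → ∞; and (c) for every function f : ℝ → ℝ that is Riemann integrable on [0,1], it is NOT the case that ∫_{[0,1]} |f − G_k| dλ → 0. Hence the normed space of a.e.-equivalence classes of Riemann integrable functions on [0,1] with the L¹ norm is not complete. -/

import Mathlib

open MeasureTheory Filter Topology BoxIntegral

noncomputable def unitBox : BoxIntegral.Box (Fin 1) :=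
  ⟨fun _ => 0, fun _ => 1, fun _ => one_pos⟩

/-- `f : ℝ → ℝ` is Riemann integrable on `[0,1]`, in the sense of Mathlib's
box-integral theory with the Riemann integration parameters. -/
def RiemannIntegrableOn01 (f : ℝ → ℝ) : Prop :=
  BoxIntegral.Integrable unitBox BoxIntegral.IntegrationParams.Riemann
    (fun x => f (x 0)) (volume : Measure (Fin 1 → ℝ)).toBoxAdditive.toSMul

open Set
set_option linter.unusedSectionVars false
set_option linter.unusedVariables false

variable {ι : Type} [Fintype ι] {I : Box ι}

open scoped Classical in
noncomputable def retag (π : TaggedPrepartition I) (T : Box ι → ι → ℝ) :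
    TaggedPrepartition I :=
  ⟨π.toPrepartition, fun J => if h : J ∈ π ∧ T J ∈ Box.Icc J then T J else π.tag J, fun J => by
    by_cases h : J ∈ π ∧ T J ∈ Box.Icc J
    · simpa [h] using Box.le_iff_Icc.1 (π.toPrepartition.le_of_mem' J h.1) h.2
    · simpa [h] using π.tag_mem_Icc J⟩

lemma retag_tag {π : TaggedPrepartition I} {T : Box ι → ι → ℝ} {J : Box ι}
    (hJ : J ∈ π) (hT : T J ∈ Box.Icc J) : (retag π T).tag J = T J := by
  simp only [retag]
  rw [dif_pos ⟨hJ, hT⟩]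

lemma retag_mem {π : TaggedPrepartition I} {T : Box ι → ι → ℝ} {J : Box ι} :
    J ∈ retag π T ↔ J ∈ π := Iff.rfl

lemma retag_isPartition {π : TaggedPrepartition I} (h : π.IsPartition) (T : Box ι → ι → ℝ) :
    (retag π T).IsPartition := h

lemma retag_isHenstock {π : TaggedPrepartition I} {T : Box ι → ι → ℝ}
    (hT : ∀ J ∈ π, T J ∈ Box.Icc J) : (retag π T).IsHenstock := fun J hJ => by
  have hJ' : J ∈ π := hJ
  rw [retag_tag hJ' (hT J hJ')]; exact hT J hJ'

lemma retag_subord {π : TaggedPrepartition I} {T : Box ι → ι → ℝ} {δ : ℝ}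
    (hs : ∀ J ∈ π, Box.Icc J ⊆ Metric.closedBall (π.tag J) (δ/2))
    (hT : ∀ J ∈ π, T J ∈ Box.Icc J) :
    ∀ J ∈ retag π T, Box.Icc J ⊆ Metric.closedBall ((retag π T).tag J) δ := by
  intro J hJ x hx
  have hJ' : J ∈ π := hJ
  rw [retag_tag hJ' (hT J hJ')]
  have h1 := hs J hJ' hx
  have h2 := hs J hJ' (hT J hJ')
  simp only [Metric.mem_closedBall] at *
  calc dist x (T J) ≤ dist x (π.tag J) + dist (T J) (π.tag J) := dist_triangle_right _ _ _
  _ ≤ δ/2 + δ/2 := add_le_add h1 h2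
  _ = δ := add_halves δ

lemma exists_base (I : Box ι) {δ : ℝ} (hδ : 0 < δ) :
    ∃ π : TaggedPrepartition I, π.IsPartition ∧ π.IsHenstock ∧
      ∀ J ∈ π, Box.Icc J ⊆ Metric.closedBall (π.tag J) δ := by
  obtain ⟨π, h1, h2, h3, -, -⟩ :=
    Box.exists_taggedPartition_isHenstock_isSubordinate_homothetic I
      (fun _ => ⟨δ, hδ⟩)
  exact ⟨π, h1, h2, fun J hJ => h3 J hJ⟩

lemma riemann_close {f : (ι → ℝ) → ℝ} {vol : ι →ᵇᵃ (ℝ →L[ℝ] ℝ)}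
    (hf : Integrable I IntegrationParams.Riemann f vol) {ε : ℝ} (hε : 0 < ε) :
    ∃ δ : ℝ, 0 < δ ∧ ∀ π₁ π₂ : TaggedPrepartition I, π₁.IsPartition → π₂.IsPartition →
      π₁.IsHenstock → π₂.IsHenstock →
      (∀ J ∈ π₁, Box.Icc J ⊆ Metric.closedBall (π₁.tag J) δ) →
      (∀ J ∈ π₂, Box.Icc J ⊆ Metric.closedBall (π₂.tag J) δ) →
      dist (integralSum f vol π₁) (integralSum f vol π₂) ≤ ε + ε := by
  set r := hf.convergenceR ε 1 with hr
  have hrc : ∀ x, r x = r 0 := hf.convergenceR_cond ε 1 rfl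
  refine ⟨r 0, (r 0).2, fun π₁ π₂ hp₁ hp₂ hh₁ hh₂ hs₁ hs₂ => ?_⟩
  have mem : ∀ π : TaggedPrepartition I, π.IsHenstock →
      (∀ J ∈ π, Box.Icc J ⊆ Metric.closedBall (π.tag J) (r 0)) →
      IntegrationParams.Riemann.MemBaseSet I 1 r π := by
    intro π hh hs
    refine ⟨fun J hJ => ?_, fun _ => hh,
      fun hD => by simp [IntegrationParams.Riemann] at hD,
      fun hD => by simp [IntegrationParams.Riemann] at hD⟩
    rw [hrc (π.tag J)]; exact hs J hJ
  exact hf.dist_integralSum_le_of_memBaseSet hε hε (mem π₁ hh₁ hs₁) (mem π₂ hh₂ hs₂)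
    (by rw [(TaggedPrepartition.isPartition_iff_iUnion_eq _).1 hp₁,
            (TaggedPrepartition.isPartition_iff_iUnion_eq _).1 hp₂])


noncomputable abbrev e1 : (Fin 1 → ℝ) ≃ᵐ ℝ := MeasurableEquiv.funUnique (Fin 1) ℝ

lemma e1_apply (x : Fin 1 → ℝ) : e1 x = x 0 := rfl

lemma e1_const (y : ℝ) : e1 (fun _ => y) = y := rfl

lemma box_coe_eq (J : Box (Fin 1)) :
    (J : Set (Fin 1 → ℝ)) = e1 ⁻¹' Ioc (J.lower 0) (J.upper 0) := by
  ext x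
  simp only [Box.mem_coe, Box.mem_def, Fin.forall_fin_one, mem_preimage, e1_apply]

lemma box_Icc_eq (J : Box (Fin 1)) :
    Box.Icc J = e1 ⁻¹' Icc (J.lower 0) (J.upper 0) := by
  ext x
  simp only [Box.Icc_def, mem_Icc, Pi.le_def, Fin.forall_fin_one, mem_preimage, e1_apply]

lemma volume_e1_preimage (s : Set ℝ) (hs : MeasurableSet s) :
    volume (e1 ⁻¹' s) = volume s :=
  (volume_preserving_funUnique (Fin 1) ℝ).measure_preimage hs.nullMeasurableSet

lemma volume_box (J : Box (Fin 1)) :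
    volume (J : Set (Fin 1 → ℝ)) = ENNReal.ofReal (J.upper 0 - J.lower 0) := by
  rw [box_coe_eq, volume_e1_preimage _ measurableSet_Ioc, Real.volume_Ioc]

lemma volume_box_Icc (J : Box (Fin 1)) :
    volume (Box.Icc J) = ENNReal.ofReal (J.upper 0 - J.lower 0) := by
  rw [box_Icc_eq, volume_e1_preimage _ measurableSet_Icc, Real.volume_Icc]

lemma toBoxAdditive_eq (J : Box (Fin 1)) :
    (volume : Measure (Fin 1 → ℝ)).toBoxAdditive J = J.upper 0 - J.lower 0 := by
  rw [Measure.toBoxAdditive_apply, measureReal_def, volume_box,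
    ENNReal.toReal_ofReal (sub_nonneg.2 (J.lower_lt_upper 0).le)]

lemma toBoxAdditive_pos (J : Box (Fin 1)) :
    0 < (volume : Measure (Fin 1 → ℝ)).toBoxAdditive J := by
  rw [toBoxAdditive_eq]; exact sub_pos.2 (J.lower_lt_upper 0)

lemma unitBox_lower : (unitBox).lower 0 = 0 := rfl
lemma unitBox_upper : (unitBox).upper 0 = 1 := rfl

/-- the integral sum for `vol = volume.toBoxAdditive.toSMul`. -/
lemma integralSum_eq (f : (Fin 1 → ℝ) → ℝ) {I : Box (Fin 1)} (π : TaggedPrepartition I) :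
    integralSum f (volume : Measure (Fin 1 → ℝ)).toBoxAdditive.toSMul π
      = ∑ J ∈ π.boxes, (volume : Measure (Fin 1 → ℝ)).toBoxAdditive J * f (π.tag J) := by
  rfl


section sets
variable {q : ℕ → ℝ} {ℓ : ℝ} {I : ℕ → Set ℝ} {Ak : ℕ → Set ℝ} {A : Set ℝ}

lemma meas_I (hI : ∀ j, I j = Set.Icc (0:ℝ) 1 ∩
    Set.Ioo (q j - ℓ / 2 ^ (j + 1)) (q j + ℓ / 2 ^ (j + 1))) (j : ℕ) :
    MeasurableSet (I j) := by
  rw [hI]; exact measurableSet_Icc.inter measurableSet_Ioo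

lemma vol_I (hℓ : ℓ ∈ Set.Ioo (0:ℝ) 1)
    (hI : ∀ j, I j = Set.Icc (0:ℝ) 1 ∩
      Set.Ioo (q j - ℓ / 2 ^ (j + 1)) (q j + ℓ / 2 ^ (j + 1))) (j : ℕ) :
    volume (I j) ≤ ENNReal.ofReal (ℓ * (1/2) ^ j) := by
  rw [hI]
  refine le_trans (measure_mono inter_subset_right) ?_
  rw [Real.volume_Ioo]
  apply ENNReal.ofReal_le_ofReal
  have : q j + ℓ / 2 ^ (j + 1) - (q j - ℓ / 2 ^ (j + 1)) = ℓ * (1/2)^j := by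
    rw [pow_succ]; ring_nf; norm_num
  rw [this]

lemma meas_Ak
    (hI : ∀ j, I j = Set.Icc (0:ℝ) 1 ∩
      Set.Ioo (q j - ℓ / 2 ^ (j + 1)) (q j + ℓ / 2 ^ (j + 1)))
    (hAk : ∀ k, Ak k = ⋃ j ∈ Set.Icc 1 k, I j) (k : ℕ) :
    MeasurableSet (Ak k) := by
  rw [hAk]
  exact MeasurableSet.biUnion (Set.Icc 1 k).to_countable (fun j _ => meas_I hI j)

lemma meas_A
    (hI : ∀ j, I j = Set.Icc (0:ℝ) 1 ∩
      Set.Ioo (q j - ℓ / 2 ^ (j + 1)) (q j + ℓ / 2 ^ (j + 1)))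
    (hA : A = ⋃ j ∈ {j : ℕ | 1 ≤ j}, I j) :
    MeasurableSet A := by
  rw [hA]
  exact MeasurableSet.biUnion {j : ℕ | 1 ≤ j}.to_countable (fun j _ => meas_I hI j)

lemma Ak_subset_A (hAk : ∀ k, Ak k = ⋃ j ∈ Set.Icc 1 k, I j)
    (hA : A = ⋃ j ∈ {j : ℕ | 1 ≤ j}, I j) (k : ℕ) : Ak k ⊆ A := by
  rw [hAk, hA]
  exact Set.biUnion_subset_biUnion_left (fun j hj => hj.1)

lemma Ak_mono (hAk : ∀ k, Ak k = ⋃ j ∈ Set.Icc 1 k, I j) {k m : ℕ} (h : k ≤ m) :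
    Ak k ⊆ Ak m := by
  rw [hAk, hAk]
  exact Set.biUnion_subset_biUnion_left (fun j hj => ⟨hj.1, hj.2.trans h⟩)

lemma vol_A_diff (hℓ : ℓ ∈ Set.Ioo (0:ℝ) 1)
    (hI : ∀ j, I j = Set.Icc (0:ℝ) 1 ∩
      Set.Ioo (q j - ℓ / 2 ^ (j + 1)) (q j + ℓ / 2 ^ (j + 1)))
    (hAk : ∀ k, Ak k = ⋃ j ∈ Set.Icc 1 k, I j)
    (hA : A = ⋃ j ∈ {j : ℕ | 1 ≤ j}, I j) (k : ℕ) :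
    volume (A \ Ak k) ≤ ENNReal.ofReal (ℓ * (1/2) ^ k) := by
  have hsub : A \ Ak k ⊆ ⋃ j : ℕ, I (j + (k + 1)) := by
    intro x hx
    obtain ⟨hxA, hxk⟩ := hx
    rw [hA] at hxA
    simp only [mem_iUnion, exists_prop, mem_setOf_eq] at hxA
    obtain ⟨j, hj1, hjx⟩ := hxA
    rcases le_or_gt j k with hjk | hjk
    · exact absurd (by rw [hAk]; exact mem_biUnion ⟨hj1, hjk⟩ hjx) hxk
    · refine mem_iUnion.2 ⟨j - (k+1), ?_⟩
      rwa [Nat.sub_add_cancel hjk]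
  refine le_trans (measure_mono hsub) (le_trans (measure_iUnion_le _) ?_)
  have hb : ∀ j : ℕ, volume (I (j + (k + 1)))
      ≤ ENNReal.ofReal (ℓ * (1/2) ^ k) * ((1:ENNReal)/2) ^ (j + 1) := by
    intro j
    refine le_trans (vol_I hℓ hI (j + (k+1))) (le_of_eq ?_)
    rw [show (1:ENNReal)/2 = ENNReal.ofReal (1/2) by
        rw [ENNReal.ofReal_div_of_pos] <;> simp,
      ← ENNReal.ofReal_pow (by norm_num), ← ENNReal.ofReal_mul (mul_nonneg hℓ.1.le (by positivity))]
    congr 1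
    rw [show j + (k+1) = k + (j+1) by omega, pow_add]
    ring
  refine le_trans (ENNReal.tsum_le_tsum hb) ?_
  rw [ENNReal.tsum_mul_left]
  have hsum : ∑' j : ℕ, ((1:ENNReal)/2) ^ (j + 1) = 1 := by
    have hgeo := ENNReal.tsum_geometric (2⁻¹ : ENNReal)
    calc ∑' j : ℕ, ((1:ENNReal)/2) ^ (j + 1)
        = ∑' j : ℕ, 2⁻¹ * (2⁻¹: ENNReal) ^ j := by
          simp only [one_div, pow_succ]
          exact tsum_congr fun j => mul_comm _ _
      _ = 2⁻¹ * ∑' j : ℕ, (2⁻¹: ENNReal) ^ j := ENNReal.tsum_mul_left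
      _ = 2⁻¹ * (1 - 2⁻¹)⁻¹ := by rw [hgeo]
      _ = 1 := by
          rw [ENNReal.one_sub_inv_two, inv_inv]
          exact ENNReal.inv_mul_cancel (by norm_num) (by norm_num)
  rw [hsum, mul_one]

lemma vol_A (hℓ : ℓ ∈ Set.Ioo (0:ℝ) 1)
    (hI : ∀ j, I j = Set.Icc (0:ℝ) 1 ∩
      Set.Ioo (q j - ℓ / 2 ^ (j + 1)) (q j + ℓ / 2 ^ (j + 1)))
    (hAk : ∀ k, Ak k = ⋃ j ∈ Set.Icc 1 k, I j)
    (hA : A = ⋃ j ∈ {j : ℕ | 1 ≤ j}, I j) :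
    volume A ≤ ENNReal.ofReal ℓ := by
  have h0 : Ak 0 = ∅ := by
    rw [hAk]
    simp [Set.Icc]
    intro j h1 h2
    omega
  have := vol_A_diff hℓ hI hAk hA 0
  rw [h0, diff_empty, pow_zero, mul_one] at this
  exact this

lemma vol_pos_inter (hq : Set.BijOn q {n : ℕ | 1 ≤ n}
      (Set.Icc (0:ℝ) 1 ∩ Set.range ((↑) : ℚ → ℝ)))
    (hℓ : ℓ ∈ Set.Ioo (0:ℝ) 1)
    (hI : ∀ j, I j = Set.Icc (0:ℝ) 1 ∩
      Set.Ioo (q j - ℓ / 2 ^ (j + 1)) (q j + ℓ / 2 ^ (j + 1)))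
    (hA : A = ⋃ j ∈ {j : ℕ | 1 ≤ j}, I j)
    {a b : ℝ} (ha : 0 ≤ a) (hab : a < b) (hb : b ≤ 1) :
    0 < volume (A ∩ Ioo a b) := by
  obtain ⟨s, hs1, hs2⟩ := exists_rat_btwn hab
  have hmem : (s:ℝ) ∈ Set.Icc (0:ℝ) 1 ∩ Set.range ((↑) : ℚ → ℝ) :=
    ⟨⟨ha.trans hs1.le, hs2.le.trans hb⟩, ⟨s, rfl⟩⟩
  obtain ⟨j, hj1, hjq⟩ := hq.surjOn hmem
  set d := ℓ / 2 ^ (j + 1) with hd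
  have hdpos : 0 < d := div_pos hℓ.1 (by positivity)
  have hsub : Ioo (max (q j - d) a) (min (q j + d) b) ⊆ A ∩ Ioo a b := by
    intro x hx
    obtain ⟨hx1, hx2⟩ := hx
    have hxa : a < x := lt_of_le_of_lt (le_max_right _ _) hx1
    have hxb : x < b := lt_of_lt_of_le hx2 (min_le_right _ _)
    refine ⟨?_, hxa, hxb⟩
    rw [hA]
    refine mem_biUnion hj1 ?_
    rw [hI]
    exact ⟨⟨ha.trans hxa.le, hxb.le.trans hb⟩,
      lt_of_le_of_lt (le_max_left _ _) hx1, lt_of_lt_of_le hx2 (min_le_left _ _)⟩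
  refine lt_of_lt_of_le ?_ (measure_mono hsub)
  rw [Real.volume_Ioo]
  rw [ENNReal.ofReal_pos]
  have h1 : max (q j - d) a < q j := by
    rw [max_lt_iff]
    constructor
    · linarith
    · rw [hjq]; exact hs1
  have h2 : q j < min (q j + d) b := by
    rw [lt_min_iff]
    constructor
    · linarith
    · rw [hjq]; exact hs2
  linarith

end sets


section ab
variable {Ak : ℕ → Set ℝ} {A : Set ℝ}

lemma integral_ind {D : Set ℝ} (hD : MeasurableSet D) :
    ∫ x in Icc (0:ℝ) 1, D.indicator (fun _ => (1:ℝ)) x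
      = (volume (D ∩ Icc (0:ℝ) 1)).toReal := by
  rw [integral_indicator hD, Measure.restrict_restrict hD, setIntegral_const, smul_eq_mul,
    mul_one, measureReal_def]

lemma integrable_ind {D : Set ℝ} (hD : MeasurableSet D) :
    Integrable (D.indicator (fun _ => (1:ℝ))) (volume.restrict (Icc (0:ℝ) 1)) := by
  rw [integrable_indicator_iff hD]
  refine integrableOn_const (ne_of_lt ?_)
  rw [Measure.restrict_apply hD]
  exact lt_of_le_of_lt (measure_mono inter_subset_right)
    (by simp [Real.volume_Icc])

lemma ind_mem01 (D : Set ℝ) (x : ℝ) : D.indicator (fun _ => (1:ℝ)) x = 0 ∨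
    D.indicator (fun _ => (1:ℝ)) x = 1 := by
  by_cases hx : x ∈ D
  · exact Or.inr (Set.indicator_of_mem hx _)
  · exact Or.inl (Set.indicator_of_notMem hx _)

end ab

section ab2
variable {q : ℕ → ℝ} {ℓ : ℝ} {I : ℕ → Set ℝ} {Ak : ℕ → Set ℝ} {A : Set ℝ}
  {Gk : ℕ → ℝ → ℝ} {G : ℝ → ℝ}

lemma partA (hℓ : ℓ ∈ Set.Ioo (0:ℝ) 1)
    (hI : ∀ j, I j = Set.Icc (0:ℝ) 1 ∩
      Set.Ioo (q j - ℓ / 2 ^ (j + 1)) (q j + ℓ / 2 ^ (j + 1)))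
    (hAk : ∀ k, Ak k = ⋃ j ∈ Set.Icc 1 k, I j)
    (hA : A = ⋃ j ∈ {j : ℕ | 1 ≤ j}, I j)
    (hGk : ∀ k, Gk k = Set.indicator (Ak k) (fun _ => (1:ℝ))) :
    ∀ ε : ℝ, 0 < ε → ∃ N : ℕ, ∀ k ≥ N, ∀ m ≥ N,
      ∫ x in Set.Icc (0:ℝ) 1, |Gk k x - Gk m x| < ε := by
  intro ε hε
  obtain ⟨N, hN⟩ := exists_pow_lt_of_lt_one hε (by norm_num : (1:ℝ)/2 < 1)
  have hN' : ℓ * (1/2) ^ N < ε :=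
    lt_of_le_of_lt (by nlinarith [pow_pos (by norm_num : (0:ℝ) < 1/2) N, hℓ.1, hℓ.2]) hN
  refine ⟨N, fun k hk m hm => ?_⟩
  have hDm : MeasurableSet (A \ Ak N) := (meas_A hI hA).diff (meas_Ak hI hAk N)
  have hpt : ∀ x, |Gk k x - Gk m x| ≤ (A \ Ak N).indicator (fun _ => (1:ℝ)) x := by
    intro x
    rw [hGk, hGk]
    by_cases hxN : x ∈ Ak N
    · rw [indicator_of_mem (Ak_mono hAk hk hxN), indicator_of_mem (Ak_mono hAk hm hxN)]
      simpa using indicator_nonneg (fun a _ => by norm_num) x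
    · by_cases hxA : x ∈ A
      · rw [indicator_of_mem (show x ∈ A \ Ak N from ⟨hxA, hxN⟩)]
        rcases ind_mem01 (Ak k) x with h1 | h1 <;> rcases ind_mem01 (Ak m) x with h2 | h2 <;>
          rw [h1, h2] <;> norm_num
      · have hk' : x ∉ Ak k := fun h => hxA (Ak_subset_A hAk hA k h)
        have hm' : x ∉ Ak m := fun h => hxA (Ak_subset_A hAk hA m h)
        rw [indicator_of_notMem hk', indicator_of_notMem hm']
        simpa using indicator_nonneg (fun a _ => by norm_num) x
  have hint : Integrable (fun x => |Gk k x - Gk m x|) (volume.restrict (Icc (0:ℝ) 1)) := by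
    simp only [hGk]
    exact ((integrable_ind (meas_Ak hI hAk k)).sub (integrable_ind (meas_Ak hI hAk m))).abs
  calc ∫ x in Set.Icc (0:ℝ) 1, |Gk k x - Gk m x|
      ≤ ∫ x in Set.Icc (0:ℝ) 1, (A \ Ak N).indicator (fun _ => (1:ℝ)) x :=
        integral_mono hint (integrable_ind hDm) hpt
    _ = (volume ((A \ Ak N) ∩ Icc (0:ℝ) 1)).toReal := integral_ind hDm
    _ ≤ ℓ * (1/2) ^ N := ENNReal.toReal_le_of_le_ofReal
        (mul_nonneg hℓ.1.le (by positivity))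
        (le_trans (measure_mono inter_subset_left) (vol_A_diff hℓ hI hAk hA N))
    _ < ε := hN'

lemma partB_pt (hAk : ∀ k, Ak k = ⋃ j ∈ Set.Icc 1 k, I j)
    (hA : A = ⋃ j ∈ {j : ℕ | 1 ≤ j}, I j)
    (hGk : ∀ k, Gk k = Set.indicator (Ak k) (fun _ => (1:ℝ)))
    (hG : G = Set.indicator A (fun _ => (1:ℝ))) (k : ℕ) (x : ℝ) :
    |G x - Gk k x| = (A \ Ak k).indicator (fun _ => (1:ℝ)) x := by
  rw [hG, hGk]
  by_cases hxk : x ∈ Ak k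
  · rw [indicator_of_mem hxk, indicator_of_mem (Ak_subset_A hAk hA k hxk),
      indicator_of_notMem (fun h => h.2 hxk)]
    simp
  · by_cases hxA : x ∈ A
    · rw [indicator_of_mem hxA, indicator_of_notMem hxk,
        indicator_of_mem (show x ∈ A \ Ak k from ⟨hxA, hxk⟩)]
      simp
    · rw [indicator_of_notMem hxA, indicator_of_notMem hxk,
        indicator_of_notMem (fun h => hxA h.1)]
      simp

lemma partB (hℓ : ℓ ∈ Set.Ioo (0:ℝ) 1)
    (hI : ∀ j, I j = Set.Icc (0:ℝ) 1 ∩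
      Set.Ioo (q j - ℓ / 2 ^ (j + 1)) (q j + ℓ / 2 ^ (j + 1)))
    (hAk : ∀ k, Ak k = ⋃ j ∈ Set.Icc 1 k, I j)
    (hA : A = ⋃ j ∈ {j : ℕ | 1 ≤ j}, I j)
    (hGk : ∀ k, Gk k = Set.indicator (Ak k) (fun _ => (1:ℝ)))
    (hG : G = Set.indicator A (fun _ => (1:ℝ))) :
    Tendsto (fun k => ∫ x in Set.Icc (0:ℝ) 1, |G x - Gk k x|) atTop (𝓝 0) := by
  have heq : ∀ k, ∫ x in Set.Icc (0:ℝ) 1, |G x - Gk k x|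
      = (volume ((A \ Ak k) ∩ Icc (0:ℝ) 1)).toReal := by
    intro k
    rw [show (fun x => |G x - Gk k x|) = (A \ Ak k).indicator (fun _ => (1:ℝ)) from
      funext (partB_pt hAk hA hGk hG k)]
    exact integral_ind ((meas_A hI hA).diff (meas_Ak hI hAk k))
  simp only [heq]
  refine squeeze_zero (g := fun k => ℓ * (1/2)^k) (fun k => ENNReal.toReal_nonneg) (fun k => ?_) ?_
  · exact ENNReal.toReal_le_of_le_ofReal (mul_nonneg hℓ.1.le (by positivity))
      (le_trans (measure_mono inter_subset_left) (vol_A_diff hℓ hI hAk hA k))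
  · have := (tendsto_pow_atTop_nhds_zero_of_lt_one (by norm_num : (0:ℝ) ≤ 1/2)
      (by norm_num : (1:ℝ)/2 < 1)).const_mul ℓ
    simpa using this

end ab2

section bdd

lemma closure_preimage (s : Set ℝ) :
    closure ((fun x : Fin 1 → ℝ => x 0) ⁻¹' s)
      = (fun x : Fin 1 → ℝ => x 0) ⁻¹' closure s := by
  have h := (Homeomorph.funUnique (Fin 1) ℝ).preimage_closure s
  exact h.symm

lemma Icc_subset_closure_box (J : Box (Fin 1)) :
    Box.Icc J ⊆ closure (J : Set (Fin 1 → ℝ)) := by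
  rw [box_coe_eq, box_Icc_eq]
  show (fun x : Fin 1 → ℝ => x 0) ⁻¹' Icc _ _ ⊆
    closure ((fun x : Fin 1 → ℝ => x 0) ⁻¹' Ioc _ _)
  rw [closure_preimage, closure_Ioc (J.lower_lt_upper 0).ne]

lemma cover_Icc {I : Box (Fin 1)} {π : Prepartition I} (h : π.IsPartition) :
    Box.Icc I ⊆ ⋃ J ∈ π.boxes, Box.Icc J := by
  have hclosed : IsClosed (⋃ J ∈ π.boxes, Box.Icc J) :=
    isClosed_biUnion_finset fun J _ => by rw [Box.Icc_def]; exact isClosed_Icc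
  have hsub : π.iUnion ⊆ ⋃ J ∈ π.boxes, Box.Icc J := by
    intro y hy
    obtain ⟨J, hJ, hyJ⟩ := (Prepartition.mem_iUnion _).1 hy
    exact mem_iUnion₂.2 ⟨J, hJ, Box.coe_subset_Icc hyJ⟩
  intro x hx
  have h1 : x ∈ closure (I : Set (Fin 1 → ℝ)) := Icc_subset_closure_box I hx
  rw [← h.iUnion_eq] at h1
  exact (closure_minimal hsub hclosed) h1

/-- Any Riemann box-integrable function is bounded on the closed box. -/
lemma riemann_bounded {f : (Fin 1 → ℝ) → ℝ} {I : Box (Fin 1)}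
    (hf : Integrable I IntegrationParams.Riemann f
      (volume : Measure (Fin 1 → ℝ)).toBoxAdditive.toSMul) :
    ∃ C : ℝ, ∀ x ∈ Box.Icc I, |f x| ≤ C := by
  by_contra hC
  push_neg at hC
  obtain ⟨δ, hδ, hkey⟩ := riemann_close hf (ε := 1) one_pos
  obtain ⟨π₀, hp, hh, hs⟩ := exists_base I (half_pos hδ)
  have hs' : ∀ J ∈ π₀, Box.Icc J ⊆ Metric.closedBall (π₀.tag J) δ :=
    fun J hJ => (hs J hJ).trans (Metric.closedBall_subset_closedBall (by linarith))
  -- find a box on whose Icc f is unbounded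
  have hunb : ∃ J ∈ π₀.boxes, ∀ C : ℝ, ∃ x ∈ Box.Icc J, C < |f x| := by
    by_contra hb
    push_neg at hb
    have hb' : ∀ J : Box (Fin 1), ∃ C : ℝ, J ∈ π₀.boxes → ∀ x ∈ Box.Icc J, |f x| ≤ C := by
      intro J
      by_cases hJ : J ∈ π₀.boxes
      · obtain ⟨C, hC'⟩ := hb J hJ
        exact ⟨C, fun _ => hC'⟩
      · exact ⟨0, fun h => absurd h hJ⟩
    choose CJ hCJ using hb'
    have hne : π₀.boxes.Nonempty := by
      have hu : I.upper ∈ π₀.toPrepartition.iUnion := by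
        rw [hp.iUnion_eq]; exact I.upper_mem
      obtain ⟨J, hJ, -⟩ := (Prepartition.mem_iUnion _).1 hu
      exact ⟨J, hJ⟩
    obtain ⟨x, hx, hfx⟩ := hC (π₀.boxes.sup' hne CJ)
    obtain ⟨J, hJ, hxJ⟩ := mem_iUnion₂.1 (cover_Icc hp hx)
    exact absurd (hCJ J hJ x hxJ) (not_le.2 (lt_of_le_of_lt (Finset.le_sup' CJ hJ) hfx))
  obtain ⟨Js, hJs, hJunb⟩ := hunb
  set vol' := (volume : Measure (Fin 1 → ℝ)).toBoxAdditive with hvol'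
  have hv : 0 < vol' Js := toBoxAdditive_pos Js
  set t := π₀.tag Js with ht
  obtain ⟨xb, hxb, hxbig⟩ := hJunb (|f t| + 3 / vol' Js)
  classical
  set T : Box (Fin 1) → (Fin 1 → ℝ) := fun J => if J = Js then xb else π₀.tag J with hT
  have hTmem : ∀ J ∈ π₀, T J ∈ Box.Icc J := by
    intro J hJ
    by_cases h : J = Js
    · rw [hT]; simp only [h, if_pos rfl]; exact h ▸ hxb
    · rw [hT]; simp only [if_neg h]; exact hh J hJ
  set π₂ := retag π₀ T with hπ₂
  have hd := hkey π₀ π₂ hp (retag_isPartition hp T) hh (retag_isHenstock hTmem) hs'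
    (retag_subord hs hTmem)
  have htag2 : ∀ J ∈ π₀.boxes, π₂.tag J = T J := fun J hJ => retag_tag hJ (hTmem J hJ)
  have hboxes : π₂.boxes = π₀.boxes := rfl
  rw [Real.dist_eq] at hd
  have hsum : integralSum f vol'.toSMul π₀ - integralSum f vol'.toSMul π₂
      = vol' Js * (f t - f xb) := by
    rw [integralSum_eq, integralSum_eq, hboxes]
    rw [show ∑ J ∈ π₀.boxes, vol' J * f (π₂.tag J) = ∑ J ∈ π₀.boxes, vol' J * f (T J) from
      Finset.sum_congr rfl fun J hJ => by rw [htag2 J hJ]]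
    rw [← Finset.sum_sub_distrib]
    rw [Finset.sum_eq_single Js]
    · have hTJ : T Js = xb := by rw [hT]; exact if_pos rfl
      rw [hTJ, ht]; ring
    · intro J hJ hne
      have hTJ : T J = π₀.tag J := by rw [hT]; exact if_neg hne
      rw [hTJ]; ring
    · intro h; exact absurd hJs h
  rw [hsum] at hd
  have h3 : 3 < vol' Js * |f t - f xb| := by
    have h1 : |f t| + 3 / vol' Js < |f xb| := hxbig
    have h2 : |f xb| - |f t| ≤ |f t - f xb| := by
      have := abs_sub_abs_le_abs_sub (f xb) (f t)
      rwa [abs_sub_comm] at this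
    have : 3 / vol' Js < |f t - f xb| := by linarith
    calc (3:ℝ) = vol' Js * (3 / vol' Js) := by field_simp
    _ < vol' Js * |f t - f xb| := by exact mul_lt_mul_of_pos_left this hv
  rw [abs_mul, abs_of_pos hv] at hd
  linarith

end bdd

section osc

variable {f : (Fin 1 → ℝ) → ℝ} {I : Box (Fin 1)}

lemma osc_bound
    (hf : Integrable I IntegrationParams.Riemann f
      (volume : Measure (Fin 1 → ℝ)).toBoxAdditive.toSMul)
    {C : ℝ} (hC : ∀ x ∈ Box.Icc I, |f x| ≤ C)
    {ε γ : ℝ} (hε : 0 < ε) (hγ : 0 < γ) :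
    volume {x : Fin 1 → ℝ | x ∈ (I : Set (Fin 1 → ℝ)) ∧
      ENNReal.ofReal ε ≤ oscillation f x} ≤ ENNReal.ofReal γ := by
  classical
  set η : ℝ := min (ε * γ / 8) (ε / 4) with hη
  have hηpos : 0 < η := lt_min (by positivity) (by positivity)
  have hη4 : η ≤ ε / 4 := min_le_right _ _
  have hη8 : η ≤ ε * γ / 8 := min_le_left _ _
  obtain ⟨δ, hδ, hkey⟩ := riemann_close hf hηpos
  obtain ⟨π₀, hp, hh, hs⟩ := exists_base I (half_pos hδ)
  have hs' : ∀ J ∈ π₀, Box.Icc J ⊆ Metric.closedBall (π₀.tag J) δ :=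
    fun J hJ => (hs J hJ).trans (Metric.closedBall_subset_closedBall (by linarith))
  set vol' := (volume : Measure (Fin 1 → ℝ)).toBoxAdditive with hvol'
  set M : Box (Fin 1) → ℝ := fun J => sSup (f '' Box.Icc J) with hM
  set m : Box (Fin 1) → ℝ := fun J => sInf (f '' Box.Icc J) with hm
  have hnonem : ∀ J : Box (Fin 1), (f '' Box.Icc J).Nonempty :=
    fun J => ⟨f J.upper, ⟨J.upper, J.upper_mem_Icc, rfl⟩⟩
  have hIccsub : ∀ J ∈ π₀, Box.Icc J ⊆ Box.Icc I :=
    fun J hJ => Box.le_iff_Icc.1 (π₀.toPrepartition.le_of_mem' J hJ)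
  have hbddA : ∀ J ∈ π₀, BddAbove (f '' Box.Icc J) := by
    intro J hJ
    exact ⟨C, fun y hy => by
      obtain ⟨x, hx, rfl⟩ := hy
      exact (abs_le.1 (hC x (hIccsub J hJ hx))).2⟩
  have hbddB : ∀ J ∈ π₀, BddBelow (f '' Box.Icc J) := by
    intro J hJ
    exact ⟨-C, fun y hy => by
      obtain ⟨x, hx, rfl⟩ := hy
      exact (abs_le.1 (hC x (hIccsub J hJ hx))).1⟩
  -- bounds on f over Icc J
  have hfleM : ∀ J ∈ π₀, ∀ x ∈ Box.Icc J, f x ≤ M J :=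
    fun J hJ x hx => le_csSup (hbddA J hJ) ⟨x, hx, rfl⟩
  have hmlef : ∀ J ∈ π₀, ∀ x ∈ Box.Icc J, m J ≤ f x :=
    fun J hJ x hx => csInf_le (hbddB J hJ) ⟨x, hx, rfl⟩
  have hex1 : ∀ J, J ∈ π₀.boxes → ∃ x ∈ Box.Icc J, M J - η < f x := by
    intro J hJ
    obtain ⟨y, hy, hlt⟩ := exists_lt_of_lt_csSup (hnonem J)
      (show M J - η < M J by linarith)
    obtain ⟨x, hx, rfl⟩ := hy
    exact ⟨x, hx, hlt⟩
  have hex2 : ∀ J, J ∈ π₀.boxes → ∃ x ∈ Box.Icc J, f x < m J + η := by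
    intro J hJ
    obtain ⟨y, hy, hlt⟩ := exists_lt_of_csInf_lt (hnonem J)
      (show m J < m J + η by linarith)
    obtain ⟨x, hx, rfl⟩ := hy
    exact ⟨x, hx, hlt⟩
  set T1 : Box (Fin 1) → (Fin 1 → ℝ) := fun J =>
    if h : J ∈ π₀.boxes ∧ ε ≤ M J - m J then (hex1 J h.1).choose else π₀.tag J with hT1
  set T2 : Box (Fin 1) → (Fin 1 → ℝ) := fun J =>
    if h : J ∈ π₀.boxes ∧ ε ≤ M J - m J then (hex2 J h.1).choose else π₀.tag J with hT2
  have hT1mem : ∀ J ∈ π₀, T1 J ∈ Box.Icc J := by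
    intro J hJ
    simp only [hT1]
    by_cases h : J ∈ π₀.boxes ∧ ε ≤ M J - m J
    · rw [dif_pos h]; exact (hex1 J h.1).choose_spec.1
    · rw [dif_neg h]; exact hh J hJ
  have hT2mem : ∀ J ∈ π₀, T2 J ∈ Box.Icc J := by
    intro J hJ
    simp only [hT2]
    by_cases h : J ∈ π₀.boxes ∧ ε ≤ M J - m J
    · rw [dif_pos h]; exact (hex2 J h.1).choose_spec.1
    · rw [dif_neg h]; exact hh J hJ
  set π₁ := retag π₀ T1 with hπ₁
  set π₂ := retag π₀ T2 with hπ₂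
  have hd := hkey π₁ π₂ (retag_isPartition hp T1) (retag_isPartition hp T2)
    (retag_isHenstock hT1mem) (retag_isHenstock hT2mem)
    (retag_subord hs hT1mem) (retag_subord hs hT2mem)
  rw [Real.dist_eq] at hd
  -- the sum difference
  have hdiff : integralSum f vol'.toSMul π₁ - integralSum f vol'.toSMul π₂
      = ∑ J ∈ π₀.boxes, vol' J * (f (T1 J) - f (T2 J)) := by
    rw [integralSum_eq, integralSum_eq]
    have hb1 : π₁.boxes = π₀.boxes := rfl
    have hb2 : π₂.boxes = π₀.boxes := rfl
    rw [hb1, hb2, ← Finset.sum_sub_distrib]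
    refine Finset.sum_congr rfl fun J hJ => ?_
    rw [retag_tag hJ (hT1mem J hJ), retag_tag hJ (hT2mem J hJ)]
    ring
  set bad := π₀.boxes.filter (fun J => ε ≤ M J - m J) with hbad
  have hterm_nonneg : ∀ J ∈ π₀.boxes, 0 ≤ vol' J * (f (T1 J) - f (T2 J)) := by
    intro J hJ
    by_cases h : J ∈ π₀.boxes ∧ ε ≤ M J - m J
    · have h1 : M J - η < f (T1 J) := by simp only [hT1]; rw [dif_pos h]; exact (hex1 J h.1).choose_spec.2
      have h2 : f (T2 J) < m J + η := by simp only [hT2]; rw [dif_pos h]; exact (hex2 J h.1).choose_spec.2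
      have : 0 ≤ f (T1 J) - f (T2 J) := by nlinarith [h.2]
      exact mul_nonneg (toBoxAdditive_pos J).le this
    · have hT1J : T1 J = π₀.tag J := by simp only [hT1]; exact dif_neg h
      have hT2J : T2 J = π₀.tag J := by simp only [hT2]; exact dif_neg h
      rw [hT1J, hT2J]
      simp
  have hterm_bad : ∀ J ∈ bad, (ε / 2) * vol' J ≤ vol' J * (f (T1 J) - f (T2 J)) := by
    intro J hJ
    rw [hbad, Finset.mem_filter] at hJ
    have h : J ∈ π₀.boxes ∧ ε ≤ M J - m J := hJ
    have h1 : M J - η < f (T1 J) := by simp only [hT1]; rw [dif_pos h]; exact (hex1 J h.1).choose_spec.2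
    have h2 : f (T2 J) < m J + η := by simp only [hT2]; rw [dif_pos h]; exact (hex2 J h.1).choose_spec.2
    have hv := toBoxAdditive_pos J
    have : ε / 2 ≤ f (T1 J) - f (T2 J) := by nlinarith [h.2]
    rw [mul_comm (vol' J)]
    exact mul_le_mul_of_nonneg_right this hv.le
  have hsum_bad : (ε / 2) * ∑ J ∈ bad, vol' J ≤ η + η := by
    rw [Finset.mul_sum]
    calc ∑ J ∈ bad, ε / 2 * vol' J ≤ ∑ J ∈ bad, vol' J * (f (T1 J) - f (T2 J)) :=
          Finset.sum_le_sum hterm_bad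
      _ ≤ ∑ J ∈ π₀.boxes, vol' J * (f (T1 J) - f (T2 J)) :=
          Finset.sum_le_sum_of_subset_of_nonneg (Finset.filter_subset _ _)
            (fun J hJ _ => hterm_nonneg J hJ)
      _ = integralSum f vol'.toSMul π₁ - integralSum f vol'.toSMul π₂ := hdiff.symm
      _ ≤ |integralSum f vol'.toSMul π₁ - integralSum f vol'.toSMul π₂| := le_abs_self _
      _ ≤ η + η := hd
  have hsumbad : ∑ J ∈ bad, vol' J ≤ γ / 2 := by
    have h4 : (ε/2) * (γ/2) = 2 * (ε * γ / 8) := by ring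
    have : (ε / 2) * ∑ J ∈ bad, vol' J ≤ (ε/2) * (γ/2) := by
      rw [h4]; linarith
    exact le_of_mul_le_mul_left this (by positivity)
  -- covering
  set ioo : Box (Fin 1) → Set (Fin 1 → ℝ) :=
    fun J => (fun x : Fin 1 → ℝ => x 0) ⁻¹' Ioo (J.lower 0) (J.upper 0) with hioo
  have hcover : {x : Fin 1 → ℝ | x ∈ (I : Set (Fin 1 → ℝ)) ∧
      ENNReal.ofReal ε ≤ oscillation f x} ⊆
      (⋃ J ∈ bad, Box.Icc J) ∪ (⋃ J ∈ π₀.boxes, (Box.Icc J \ ioo J)) := by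
    rintro x ⟨hxI, hxosc⟩
    have hxU : x ∈ π₀.toPrepartition.iUnion := by rw [hp.iUnion_eq]; exact hxI
    obtain ⟨J, hJ, hxJ⟩ := (Prepartition.mem_iUnion _).1 hxU
    have hxIcc : x ∈ Box.Icc J := Box.coe_subset_Icc hxJ
    by_cases hx0 : x ∈ ioo J
    · left
      refine mem_iUnion₂.2 ⟨J, ?_, hxIcc⟩
      rw [hbad, Finset.mem_filter]
      refine ⟨hJ, ?_⟩
      -- oscillation at an interior point is at most M J - m J
      have hUopen : IsOpen (ioo J) := isOpen_Ioo.preimage (continuous_apply 0)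
      have hUsub : ioo J ⊆ Box.Icc J := by
        rw [hioo, box_Icc_eq]
        exact fun y hy => ⟨le_of_lt hy.1, le_of_lt hy.2⟩
      have himg : f '' ioo J ∈ (𝓝 x).map f :=
        Filter.image_mem_map (hUopen.mem_nhds hx0)
      have hosc_le : oscillation f x ≤ EMetric.diam (f '' ioo J) := biInf_le _ himg
      have himg_sub : f '' ioo J ⊆ Icc (m J) (M J) := by
        rintro y ⟨z, hz, rfl⟩
        exact ⟨hmlef J hJ z (hUsub hz), hfleM J hJ z (hUsub hz)⟩
      have hdiam : EMetric.diam (f '' ioo J) ≤ ENNReal.ofReal (M J - m J) := by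
        refine le_trans (EMetric.diam_mono himg_sub) ?_
        rw [Real.ediam_Icc]
      have : ENNReal.ofReal ε ≤ ENNReal.ofReal (M J - m J) :=
        le_trans hxosc (le_trans hosc_le hdiam)
      have hMm : 0 ≤ M J - m J := by
        have := hmlef J hJ x hxIcc
        have := hfleM J hJ x hxIcc
        linarith
      exact (ENNReal.ofReal_le_ofReal_iff hMm).1 this
    · right
      exact mem_iUnion₂.2 ⟨J, hJ, hxIcc, hx0⟩
  refine le_trans (measure_mono hcover) ?_
  refine le_trans (measure_union_le _ _) ?_
  have hpart2 : volume (⋃ J ∈ π₀.boxes, (Box.Icc J \ ioo J)) = 0 := by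
    refine measure_biUnion_null_iff ?_ |>.2 ?_
    · exact (π₀.boxes : Finset (Box (Fin 1))).countable_toSet
    · intro J hJ
      have hsub : Box.Icc J \ ioo J ⊆
          (fun x : Fin 1 → ℝ => x 0) ⁻¹' {J.lower 0, J.upper 0} := by
        rw [box_Icc_eq, hioo]
        intro y hy
        obtain ⟨hy1, hy2⟩ := hy
        have h1 : y 0 ∈ Icc (J.lower 0) (J.upper 0) := hy1
        have h2 : y 0 ∉ Ioo (J.lower 0) (J.upper 0) := hy2
        simp only [mem_Icc] at h1
        simp only [mem_Ioo, not_and_or, not_lt] at h2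
        simp only [mem_preimage, mem_insert_iff, mem_singleton_iff]
        rcases h2 with h | h
        · exact Or.inl (le_antisymm h h1.1)
        · exact Or.inr (le_antisymm h1.2 h)
      refine measure_mono_null hsub ?_
      have : volume ((fun x : Fin 1 → ℝ => x 0) ⁻¹' {J.lower 0, J.upper 0}) =
          volume ({J.lower 0, J.upper 0} : Set ℝ) :=
        volume_e1_preimage _ ((measurableSet_singleton (J.upper 0)).insert (J.lower 0))
      rw [this]
      exact Set.Countable.measure_zero ((Set.countable_singleton (J.upper 0)).insert (J.lower 0)) _
  rw [hpart2, add_zero]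
  have hpart1 : volume (⋃ J ∈ bad, Box.Icc J) ≤ ENNReal.ofReal (γ/2) := by
    refine le_trans (measure_biUnion_finset_le _ _) ?_
    have heach : ∀ J ∈ bad, volume (Box.Icc J) = ENNReal.ofReal (vol' J) := by
      intro J hJ
      rw [volume_box_Icc, hvol', toBoxAdditive_eq]
    rw [Finset.sum_congr rfl heach]
    rw [← ENNReal.ofReal_sum_of_nonneg (fun J hJ => (toBoxAdditive_pos J).le)]
    exact ENNReal.ofReal_le_ofReal hsumbad
  exact le_trans hpart1 (ENNReal.ofReal_le_ofReal (by linarith))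

end osc

section aecont
variable {f : (Fin 1 → ℝ) → ℝ} {I : Box (Fin 1)}

lemma riemann_vanish_osc
    (hf : Integrable I IntegrationParams.Riemann f
      (volume : Measure (Fin 1 → ℝ)).toBoxAdditive.toSMul) :
    volume {x : Fin 1 → ℝ | x ∈ (I : Set (Fin 1 → ℝ)) ∧ ¬ ContinuousAt f x} = 0 := by
  obtain ⟨C, hC⟩ := riemann_bounded hf
  have hD : ∀ n : ℕ, volume {x : Fin 1 → ℝ | x ∈ (I : Set (Fin 1 → ℝ)) ∧
      ENNReal.ofReal (1/(n+1)) ≤ oscillation f x} = 0 := by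
    intro n
    have hpos : (0:ℝ) < 1/(n+1) := by positivity
    refine le_antisymm ?_ zero_le
    refine ENNReal.le_of_forall_pos_le_add (fun γ hγ _ => ?_)
    rw [zero_add]
    have h := osc_bound hf hC hpos (γ := (γ:ℝ)) (by exact_mod_cast hγ)
    rwa [ENNReal.ofReal_coe_nnreal] at h
  refine measure_mono_null ?_ (measure_iUnion_null (fun n => hD n))
  rintro x ⟨hxI, hxc⟩
  have hosc : oscillation f x ≠ 0 := by
    intro h
    exact hxc ((Oscillation.eq_zero_iff_continuousAt f x).1 h)
  obtain ⟨n, hn⟩ := ENNReal.exists_inv_nat_lt hosc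
  have hle : ENNReal.ofReal (1/(n+1)) ≤ (n : ENNReal)⁻¹ := by
    rw [one_div, show ((n:ℝ)+1) = ((n+1:ℕ):ℝ) by push_cast; ring,
      ENNReal.ofReal_inv_of_pos (by positivity), ENNReal.ofReal_natCast]
    exact ENNReal.inv_le_inv' (by exact_mod_cast Nat.le_succ n)
  exact mem_iUnion.2 ⟨n, hxI, hle.trans hn.le⟩

/-- A Riemann integrable function on `I` is Lebesgue integrable on `I`. -/
lemma riemann_integrableOn
    (hf : Integrable I IntegrationParams.Riemann f
      (volume : Measure (Fin 1 → ℝ)).toBoxAdditive.toSMul) :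
    IntegrableOn f (I : Set (Fin 1 → ℝ)) volume := by
  obtain ⟨C, hC⟩ := riemann_bounded hf
  have hnull := riemann_vanish_osc hf
  constructor
  · -- a.e. strongly measurable on I
    set v : Set (Fin 1 → ℝ) := {x | ContinuousAt f x} with hv
    have hmeas : AEStronglyMeasurable f (volume.restrict v) :=
      (continuousOn_of_forall_continuousAt fun _ h => h).aestronglyMeasurable
        (measurableSet_of_continuousAt f)
    refine hmeas.mono_measure (Measure.le_iff.2 fun s hs => ?_)
    rw [Measure.restrict_apply hs, Measure.restrict_apply hs]
    calc volume (s ∩ (I : Set (Fin 1 → ℝ)))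
        ≤ volume ((s ∩ v) ∪ {x : Fin 1 → ℝ | x ∈ (I : Set (Fin 1 → ℝ)) ∧ ¬ ContinuousAt f x}) := by
          refine measure_mono fun x hx => ?_
          by_cases hxv : x ∈ v
          · exact Or.inl ⟨hx.1, hxv⟩
          · exact Or.inr ⟨hx.2, hxv⟩
      _ ≤ volume (s ∩ v) + volume {x : Fin 1 → ℝ | x ∈ (I : Set (Fin 1 → ℝ)) ∧ ¬ ContinuousAt f x} :=
          measure_union_le _ _
      _ = volume (s ∩ v) := by rw [hnull, add_zero]
  · have hfin : IsFiniteMeasure (volume.restrict (I : Set (Fin 1 → ℝ))) :=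
      ⟨by rw [Measure.restrict_apply_univ]; exact I.measure_coe_lt_top volume⟩
    refine HasFiniteIntegral.of_bounded (C := C) ?_
    filter_upwards [ae_restrict_mem I.measurableSet_coe] with x hx
    exact hC x (Box.coe_subset_Icc hx)

end aecont

lemma riemann01_integrableOn {f : ℝ → ℝ} (hf : RiemannIntegrableOn01 f) :
    IntegrableOn f (Icc (0:ℝ) 1) volume := by
  have h1 : IntegrableOn (fun x : Fin 1 → ℝ => f (x 0)) (unitBox : Set (Fin 1 → ℝ)) volume :=
    riemann_integrableOn hf
  rw [box_coe_eq unitBox] at h1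
  have h2 : IntegrableOn f (Ioc (0:ℝ) 1) volume := by
    have h := (MeasurePreserving.integrableOn_comp_preimage
      (volume_preserving_funUnique (Fin 1) ℝ)
      (MeasurableEquiv.measurableEmbedding _) (f := f) (s := Ioc (0:ℝ) 1)).1 h1
    exact h
  have h3 : Icc (0:ℝ) 1 = {0} ∪ Ioc (0:ℝ) 1 := by
    ext x
    simp only [mem_Icc, mem_union, mem_singleton_iff, mem_Ioc]
    constructor
    · rintro ⟨h1', h2'⟩
      rcases h1'.eq_or_lt with h | h
      · exact Or.inl h.symm
      · exact Or.inr ⟨h, h2'⟩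
    · rintro (rfl | ⟨h1', h2'⟩)
      · exact ⟨le_rfl, zero_le_one⟩
      · exact ⟨h1'.le, h2'⟩
  rw [h3, integrableOn_union]
  refine ⟨?_, h2⟩
  have hz : volume.restrict ({(0:ℝ)} : Set ℝ) = 0 := by
    rw [Measure.restrict_eq_zero]; exact Real.volume_singleton
  rw [IntegrableOn, hz]
  exact integrable_zero_measure

lemma const_mem_boxIcc {J : Box (Fin 1)} {y : ℝ}
    (h : y ∈ Icc (J.lower 0) (J.upper 0)) : (fun _ : Fin 1 => y) ∈ Box.Icc J := by
  rw [box_Icc_eq]; exact h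

lemma disjoint_of_preimage {s t : Set ℝ}
    (h : Disjoint ((fun x : Fin 1 → ℝ => x 0) ⁻¹' s) ((fun x : Fin 1 → ℝ => x 0) ⁻¹' t)) :
    Disjoint s t := by
  rw [Set.disjoint_left] at h ⊢
  intro a ha hat
  exact h (a := fun _ => a) ha hat

section partc
variable {q : ℕ → ℝ} {ℓ : ℝ} {I : ℕ → Set ℝ} {Ak : ℕ → Set ℝ} {A : Set ℝ}
  {Gk : ℕ → ℝ → ℝ} {G : ℝ → ℝ}

lemma partC
    (hq : Set.BijOn q {n : ℕ | 1 ≤ n} (Set.Icc (0:ℝ) 1 ∩ Set.range ((↑) : ℚ → ℝ)))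
    (hℓ : ℓ ∈ Set.Ioo (0:ℝ) 1)
    (hI : ∀ j, I j = Set.Icc (0:ℝ) 1 ∩
      Set.Ioo (q j - ℓ / 2 ^ (j + 1)) (q j + ℓ / 2 ^ (j + 1)))
    (hAk : ∀ k, Ak k = ⋃ j ∈ Set.Icc 1 k, I j)
    (hA : A = ⋃ j ∈ {j : ℕ | 1 ≤ j}, I j)
    (hGk : ∀ k, Gk k = Set.indicator (Ak k) (fun _ => (1:ℝ)))
    (hG : G = Set.indicator A (fun _ => (1:ℝ)))
    (f : ℝ → ℝ) (hfR : RiemannIntegrableOn01 f)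
    (hten : Tendsto (fun k => ∫ x in Set.Icc (0:ℝ) 1, |f x - Gk k x|) atTop (𝓝 0)) :
    False := by
  classical
  -- Step 1 : f = G a.e. on [0,1]
  have hfi : IntegrableOn f (Icc (0:ℝ) 1) volume := riemann01_integrableOn hfR
  have hGint : Integrable G (volume.restrict (Icc (0:ℝ) 1)) := by
    rw [hG]; exact integrable_ind (meas_A hI hA)
  have hGkint : ∀ k, Integrable (Gk k) (volume.restrict (Icc (0:ℝ) 1)) := by
    intro k; rw [hGk]; exact integrable_ind (meas_Ak hI hAk k)
  have hint_fG : Integrable (fun x => |f x - G x|) (volume.restrict (Icc (0:ℝ) 1)) :=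
    (hfi.sub hGint).abs
  have hint_k : ∀ k, Integrable (fun x => |f x - Gk k x| + |G x - Gk k x|)
      (volume.restrict (Icc (0:ℝ) 1)) :=
    fun k => ((hfi.sub (hGkint k)).abs).add ((hGint.sub (hGkint k)).abs)
  have hk_le : ∀ k, ∫ x in Icc (0:ℝ) 1, |f x - G x|
      ≤ (∫ x in Icc (0:ℝ) 1, |f x - Gk k x|) + ∫ x in Icc (0:ℝ) 1, |G x - Gk k x| := by
    intro k
    have hadd : ∫ x in Icc (0:ℝ) 1, (|f x - Gk k x| + |G x - Gk k x|)
        = (∫ x in Icc (0:ℝ) 1, |f x - Gk k x|) + ∫ x in Icc (0:ℝ) 1, |G x - Gk k x| :=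
      integral_add ((hfi.sub (hGkint k)).abs) ((hGint.sub (hGkint k)).abs)
    refine le_trans (integral_mono hint_fG (hint_k k) (fun x => ?_)) (le_of_eq hadd)
    calc |f x - G x| ≤ |f x - Gk k x| + |Gk k x - G x| := abs_sub_le _ _ _
      _ = |f x - Gk k x| + |G x - Gk k x| := by rw [abs_sub_comm (Gk k x)]
  have hlim : Tendsto (fun k => (∫ x in Icc (0:ℝ) 1, |f x - Gk k x|)
      + ∫ x in Icc (0:ℝ) 1, |G x - Gk k x|) atTop (𝓝 (0 + 0)) :=
    hten.add (partB hℓ hI hAk hA hGk hG)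
  have hc0 : ∫ x in Icc (0:ℝ) 1, |f x - G x| = 0 := by
    refine le_antisymm ?_ (integral_nonneg (fun x => abs_nonneg _))
    have := ge_of_tendsto hlim (Eventually.of_forall hk_le)
    simpa using this
  have hae : ∀ᵐ x ∂(volume.restrict (Icc (0:ℝ) 1)), f x = G x := by
    have h := (integral_eq_zero_iff_of_nonneg (fun x => abs_nonneg (f x - G x)) hint_fG).1 hc0
    filter_upwards [h] with x hx
    have : |f x - G x| = 0 := hx
    have := abs_eq_zero.1 this
    linarith [sub_eq_zero.1 this]
  set Nset : Set ℝ := {x | f x ≠ G x} with hNset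
  have hN0 : volume (Nset ∩ Icc (0:ℝ) 1) = 0 := by
    have h := ae_iff.1 hae
    rwa [Measure.restrict_apply' measurableSet_Icc] at h
  -- Step 2 : Riemann-sum contradiction
  set F : (Fin 1 → ℝ) → ℝ := fun x => f (x 0) with hF
  have hf' : Integrable unitBox IntegrationParams.Riemann F
      (volume : Measure (Fin 1 → ℝ)).toBoxAdditive.toSMul := hfR
  set ε₀ : ℝ := (1 - ℓ)/4 with hε₀
  have hε₀pos : 0 < ε₀ := by simp only [hε₀]; linarith [hℓ.2]
  obtain ⟨δ, hδ, hkey⟩ := riemann_close hf' hε₀pos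
  obtain ⟨π₀, hp, hh, hs⟩ := exists_base unitBox (half_pos hδ)
  have hJle : ∀ J ∈ π₀, J ≤ unitBox := fun J hJ => π₀.toPrepartition.le_of_mem' J hJ
  have hbounds : ∀ J : Box (Fin 1), J ≤ unitBox →
      (0:ℝ) ≤ J.lower 0 ∧ J.upper 0 ≤ 1 := by
    intro J hle
    rw [Box.le_iff_bounds] at hle
    exact ⟨hle.1 0, hle.2 0⟩
  -- choices of tags
  have hc1 : ∀ J : Box (Fin 1), J ≤ unitBox →
      ∃ y : ℝ, y ∈ Ioo (J.lower 0) (J.upper 0) ∧ y ∈ A ∧ f y = G y := by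
    intro J hle
    obtain ⟨h0, h1⟩ := hbounds J hle
    have hpos := vol_pos_inter hq hℓ hI hA h0 (J.lower_lt_upper 0) h1
    have hss : A ∩ Ioo (J.lower 0) (J.upper 0) ⊆ Icc (0:ℝ) 1 :=
      fun x hx => ⟨h0.trans hx.2.1.le, hx.2.2.le.trans h1⟩
    have hdiffeq : (A ∩ Ioo (J.lower 0) (J.upper 0)) \ Nset
        = (A ∩ Ioo (J.lower 0) (J.upper 0)) \ (Nset ∩ Icc (0:ℝ) 1) := by
      ext x
      constructor
      · rintro ⟨hx, hn⟩; exact ⟨hx, fun hN => hn hN.1⟩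
      · rintro ⟨hx, hn⟩; exact ⟨hx, fun hN => hn ⟨hN, hss hx⟩⟩
    have hpos2 : 0 < volume ((A ∩ Ioo (J.lower 0) (J.upper 0)) \ Nset) := by
      rw [hdiffeq, measure_diff_null hN0]
      exact hpos
    obtain ⟨y, hy⟩ := nonempty_of_measure_ne_zero hpos2.ne'
    exact ⟨y, hy.1.2, hy.1.1, not_not.1 hy.2⟩
  have hc2 : ∀ J : Box (Fin 1), J ≤ unitBox →
      volume (Ioo (J.lower 0) (J.upper 0) \ A) ≠ 0 →
      ∃ y : ℝ, y ∈ Ioo (J.lower 0) (J.upper 0) ∧ y ∉ A ∧ f y = G y := by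
    intro J hle hne
    obtain ⟨h0, h1⟩ := hbounds J hle
    have hss : Ioo (J.lower 0) (J.upper 0) \ A ⊆ Icc (0:ℝ) 1 :=
      fun x hx => ⟨h0.trans hx.1.1.le, hx.1.2.le.trans h1⟩
    have hdiffeq : (Ioo (J.lower 0) (J.upper 0) \ A) \ Nset
        = (Ioo (J.lower 0) (J.upper 0) \ A) \ (Nset ∩ Icc (0:ℝ) 1) := by
      ext x
      constructor
      · rintro ⟨hx, hn⟩; exact ⟨hx, fun hN => hn hN.1⟩
      · rintro ⟨hx, hn⟩; exact ⟨hx, fun hN => hn ⟨hN, hss hx⟩⟩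
    have hpos2 : 0 < volume ((Ioo (J.lower 0) (J.upper 0) \ A) \ Nset) := by
      rw [hdiffeq, measure_diff_null hN0]
      exact pos_iff_ne_zero.2 hne
    obtain ⟨y, hy⟩ := nonempty_of_measure_ne_zero hpos2.ne'
    exact ⟨y, hy.1.1, hy.1.2, not_not.1 hy.2⟩
  set T1 : Box (Fin 1) → (Fin 1 → ℝ) := fun J =>
    if h : J ∈ π₀.boxes then (fun _ => (hc1 J (hJle J h)).choose) else π₀.tag J with hT1
  set T2 : Box (Fin 1) → (Fin 1 → ℝ) := fun J =>
    if h : J ∈ π₀.boxes then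
      (if h2 : volume (Ioo (J.lower 0) (J.upper 0) \ A) = 0 then T1 J
       else (fun _ => (hc2 J (hJle J h) h2).choose))
    else π₀.tag J with hT2
  have hGval1 : ∀ y, y ∈ A → G y = 1 := fun y hy => by
    rw [hG]; exact indicator_of_mem hy _
  have hGval0 : ∀ y, y ∉ A → G y = 0 := fun y hy => by
    rw [hG]; exact indicator_of_notMem hy _
  have hT1eq : ∀ (J) (hJ : J ∈ π₀.boxes),
      T1 J = fun _ => (hc1 J (hJle J hJ)).choose := by
    intro J hJ
    simp only [hT1]
    rw [dif_pos hJ]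
  have hT2eqbad : ∀ (J) (hJ : J ∈ π₀.boxes),
      volume (Ioo (J.lower 0) (J.upper 0) \ A) = 0 → T2 J = T1 J := by
    intro J hJ h2
    simp only [hT2]
    rw [dif_pos hJ, dif_pos h2]
  have hT2eqgood : ∀ (J) (hJ : J ∈ π₀.boxes)
      (h2 : volume (Ioo (J.lower 0) (J.upper 0) \ A) ≠ 0),
      T2 J = fun _ => (hc2 J (hJle J hJ) h2).choose := by
    intro J hJ h2
    simp only [hT2]
    rw [dif_pos hJ, dif_neg h2]
  have hT1val : ∀ J ∈ π₀.boxes, F (T1 J) = 1 := by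
    intro J hJ
    obtain ⟨hy1, hy2, hy3⟩ := (hc1 J (hJle J hJ)).choose_spec
    rw [hT1eq J hJ]
    show f ((hc1 J (hJle J hJ)).choose) = 1
    rw [hy3]
    exact hGval1 _ hy2
  have hT1mem : ∀ J ∈ π₀, T1 J ∈ Box.Icc J := by
    intro J hJ
    obtain ⟨hy1, hy2, hy3⟩ := (hc1 J (hJle J hJ)).choose_spec
    rw [hT1eq J hJ]
    exact const_mem_boxIcc ⟨hy1.1.le, hy1.2.le⟩
  have hT2mem : ∀ J ∈ π₀, T2 J ∈ Box.Icc J := by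
    intro J hJ
    by_cases h2 : volume (Ioo (J.lower 0) (J.upper 0) \ A) = 0
    · rw [hT2eqbad J hJ h2]
      exact hT1mem J hJ
    · obtain ⟨hy1, hy2, hy3⟩ := (hc2 J (hJle J hJ) h2).choose_spec
      rw [hT2eqgood J hJ h2]
      exact const_mem_boxIcc ⟨hy1.1.le, hy1.2.le⟩
  have hT2val : ∀ J ∈ π₀.boxes, ∀ h2 : volume (Ioo (J.lower 0) (J.upper 0) \ A) ≠ 0,
      F (T2 J) = 0 := by
    intro J hJ h2
    obtain ⟨hy1, hy2, hy3⟩ := (hc2 J (hJle J hJ) h2).choose_spec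
    rw [hT2eqgood J hJ h2]
    show f ((hc2 J (hJle J hJ) h2).choose) = 0
    rw [hy3]
    exact hGval0 _ hy2
  set π₁ := retag π₀ T1 with hπ₁
  set π₂ := retag π₀ T2 with hπ₂
  have hd := hkey π₁ π₂ (retag_isPartition hp T1) (retag_isPartition hp T2)
    (retag_isHenstock hT1mem) (retag_isHenstock hT2mem)
    (retag_subord hs hT1mem) (retag_subord hs hT2mem)
  rw [Real.dist_eq] at hd
  set vol' := (volume : Measure (Fin 1 → ℝ)).toBoxAdditive with hvol'
  set bad := π₀.boxes.filter
    (fun J => volume (Ioo (J.lower 0) (J.upper 0) \ A) = 0) with hbad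
  -- sum over bad boxes is at most ℓ
  have hbadsum : ∑ J ∈ bad, vol' J ≤ ℓ := by
    have heach : ∀ J ∈ bad, ENNReal.ofReal (vol' J)
        = volume (A ∩ Ioo (J.lower 0) (J.upper 0)) := by
      intro J hJ
      rw [hbad, Finset.mem_filter] at hJ
      have hv0 : volume (Ioo (J.lower 0) (J.upper 0) \ A) = 0 := hJ.2
      have hle1 : volume (Ioo (J.lower 0) (J.upper 0))
          ≤ volume (A ∩ Ioo (J.lower 0) (J.upper 0)) := by
        calc volume (Ioo (J.lower 0) (J.upper 0))
            ≤ volume ((A ∩ Ioo (J.lower 0) (J.upper 0))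
              ∪ (Ioo (J.lower 0) (J.upper 0) \ A)) := by
              refine measure_mono (fun x hx => ?_)
              by_cases hxA : x ∈ A
              · exact Or.inl ⟨hxA, hx⟩
              · exact Or.inr ⟨hx, hxA⟩
          _ ≤ volume (A ∩ Ioo (J.lower 0) (J.upper 0))
              + volume (Ioo (J.lower 0) (J.upper 0) \ A) := measure_union_le _ _
          _ = volume (A ∩ Ioo (J.lower 0) (J.upper 0)) := by rw [hv0, add_zero]
      have hge : volume (A ∩ Ioo (J.lower 0) (J.upper 0))
          ≤ volume (Ioo (J.lower 0) (J.upper 0)) := measure_mono inter_subset_right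
      have heq := le_antisymm hle1 hge
      rw [← heq, Real.volume_Ioo, hvol', toBoxAdditive_eq]
    have hdisj : (↑bad : Set (Box (Fin 1))).PairwiseDisjoint
        (fun J => A ∩ Ioo (J.lower 0) (J.upper 0)) := by
      intro J hJ J' hJ' hne
      have hJb : J ∈ π₀.boxes := Finset.mem_of_mem_filter J hJ
      have hJb' : J' ∈ π₀.boxes := Finset.mem_of_mem_filter J' hJ'
      have hdd := π₀.toPrepartition.pairwiseDisjoint hJb hJb' hne
      have hdd2 : Disjoint (Ioc (J.lower 0) (J.upper 0)) (Ioc (J'.lower 0) (J'.upper 0)) := by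
        refine disjoint_of_preimage ?_
        have h1 := box_coe_eq J
        have h2 := box_coe_eq J'
        rw [Function.onFun, h1, h2] at hdd
        exact hdd
      exact hdd2.mono (inter_subset_right.trans Ioo_subset_Ioc_self)
        (inter_subset_right.trans Ioo_subset_Ioc_self)
    have hmeas : ∀ J ∈ bad, MeasurableSet (A ∩ Ioo (J.lower 0) (J.upper 0)) :=
      fun J _ => (meas_A hI hA).inter measurableSet_Ioo
    have hsum : ∑ J ∈ bad, volume (A ∩ Ioo (J.lower 0) (J.upper 0))
        = volume (⋃ J ∈ bad, A ∩ Ioo (J.lower 0) (J.upper 0)) :=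
      (measure_biUnion_finset hdisj hmeas).symm
    have hle2 : volume (⋃ J ∈ bad, A ∩ Ioo (J.lower 0) (J.upper 0)) ≤ ENNReal.ofReal ℓ :=
      le_trans (measure_mono (iUnion₂_subset (fun J _ => inter_subset_left)))
        (vol_A hℓ hI hAk hA)
    have : ENNReal.ofReal (∑ J ∈ bad, vol' J) ≤ ENNReal.ofReal ℓ := by
      rw [ENNReal.ofReal_sum_of_nonneg (fun J _ => (toBoxAdditive_pos J).le)]
      rw [Finset.sum_congr rfl heach, hsum]
      exact hle2
    exact (ENNReal.ofReal_le_ofReal_iff hℓ.1.le).1 this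
  -- total sum is 1
  have htotal : ∑ J ∈ π₀.boxes, vol' J = 1 := by
    have h := vol'.sum_partition_boxes le_top hp
    rw [h, hvol', toBoxAdditive_eq]
    norm_num [unitBox]
  -- compute the difference of the two integral sums
  have hdiff : integralSum F vol'.toSMul π₁ - integralSum F vol'.toSMul π₂
      = ∑ J ∈ π₀.boxes, vol' J * (F (T1 J) - F (T2 J)) := by
    rw [integralSum_eq, integralSum_eq]
    have hb1 : π₁.boxes = π₀.boxes := rfl
    have hb2 : π₂.boxes = π₀.boxes := rfl
    rw [hb1, hb2, ← Finset.sum_sub_distrib]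
    refine Finset.sum_congr rfl fun J hJ => ?_
    rw [retag_tag hJ (hT1mem J hJ), retag_tag hJ (hT2mem J hJ)]
    ring
  have hdiff2 : ∑ J ∈ π₀.boxes, vol' J * (F (T1 J) - F (T2 J))
      = ∑ J ∈ π₀.boxes, vol' J - ∑ J ∈ bad, vol' J := by
    have hsplit : ∀ J ∈ π₀.boxes, vol' J * (F (T1 J) - F (T2 J))
        = if volume (Ioo (J.lower 0) (J.upper 0) \ A) = 0 then 0 else vol' J := by
      intro J hJ
      by_cases h2 : volume (Ioo (J.lower 0) (J.upper 0) \ A) = 0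
      · rw [if_pos h2]
        rw [hT2eqbad J hJ h2]
        ring
      · rw [if_neg h2, hT1val J hJ, hT2val J hJ h2]
        ring
    rw [Finset.sum_congr rfl hsplit]
    have h1 : ∑ J ∈ π₀.boxes,
        (if volume (Ioo (J.lower 0) (J.upper 0) \ A) = 0 then (0:ℝ) else vol' J)
        = ∑ J ∈ π₀.boxes.filter
            (fun J => ¬ volume (Ioo (J.lower 0) (J.upper 0) \ A) = 0), vol' J := by
      rw [Finset.sum_filter]
      refine Finset.sum_congr rfl fun J hJ => ?_
      by_cases h : volume (Ioo (J.lower 0) (J.upper 0) \ A) = 0 <;> simp [h]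
    rw [h1]
    have h2 := Finset.sum_filter_add_sum_filter_not π₀.boxes
      (fun J => volume (Ioo (J.lower 0) (J.upper 0) \ A) = 0) (fun J => vol' J)
    rw [← hbad] at h2
    linarith [h2]
  have hge : (1:ℝ) - ℓ ≤ integralSum F vol'.toSMul π₁ - integralSum F vol'.toSMul π₂ := by
    rw [hdiff, hdiff2, htotal]
    linarith [hbadsum]
  have hlt : integralSum F vol'.toSMul π₁ - integralSum F vol'.toSMul π₂ ≤ ε₀ + ε₀ :=
    le_trans (le_abs_self _) hd
  have heps : ε₀ + ε₀ = (1-ℓ)/2 := by rw [hε₀]; ring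
  have hl1 : ℓ < 1 := hℓ.2
  linarith

end partc

theorem stmt16 (q : ℕ → ℝ)
    (hq : Set.BijOn q {n : ℕ | 1 ≤ n} (Set.Icc (0:ℝ) 1 ∩ Set.range ((↑) : ℚ → ℝ)))
    (ℓ : ℝ) (hℓ : ℓ ∈ Set.Ioo (0:ℝ) 1)
    (I : ℕ → Set ℝ)
    (hI : ∀ j, I j = Set.Icc (0:ℝ) 1 ∩ Set.Ioo (q j - ℓ / 2 ^ (j + 1)) (q j + ℓ / 2 ^ (j + 1)))
    (Ak : ℕ → Set ℝ) (hAk : ∀ k, Ak k = ⋃ j ∈ Set.Icc 1 k, I j)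
    (A : Set ℝ) (hA : A = ⋃ j ∈ {j : ℕ | 1 ≤ j}, I j)
    (Gk : ℕ → ℝ → ℝ) (hGk : ∀ k, Gk k = Set.indicator (Ak k) (fun _ => (1:ℝ)))
    (G : ℝ → ℝ) (hG : G = Set.indicator A (fun _ => (1:ℝ))) :
    (∀ ε : ℝ, 0 < ε → ∃ N : ℕ, ∀ k ≥ N, ∀ m ≥ N,
      ∫ x in Set.Icc (0:ℝ) 1, |Gk k x - Gk m x| < ε) ∧
    Tendsto (fun k => ∫ x in Set.Icc (0:ℝ) 1, |G x - Gk k x|) atTop (𝓝 0) ∧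
    (∀ f : ℝ → ℝ, RiemannIntegrableOn01 f →
      ¬ Tendsto (fun k => ∫ x in Set.Icc (0:ℝ) 1, |f x - Gk k x|) atTop (𝓝 0)) :=
  ⟨partA hℓ hI hAk hA hGk, partB hℓ hI hAk hA hGk hG,
    fun f hf hten => partC hq hℓ hI hAk hA hGk hG f hf hten⟩
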